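/- There exists a matrix A ∈ SL(3,ℚ) whose characteristic polynomial is X³ − 3X − 1 (which is irreducible over ℚ) and which is not a product of two symmetric matrices belonging to SL(3,ℚ); in particular, A is not conjugate to its transpose ᵗA by any element of SL(3,ℚ). -/

import Mathlib

open Matrix Polynomial


def Gf {R : Type*} [CommRing R] (a b c : R) : R :=
  a^3 + 3*b^3 + 9*c^3 - 3*a^2*b + 9*a^2*c - 9*a*b*c + 18*a*c^2 - 9*b^2*c

lemma mod9 : ∀ a b c v : ZMod 9, Gf a b c = 4*v^3 →
    (a = 0 ∨ a = 3 ∨ a = 6) ∧ (v = 0 ∨ v = 3 ∨ v = 6) := by decide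

lemma zmod9_to_dvd (a : ℤ) (h : (a : ZMod 9) = 0 ∨ (a : ZMod 9) = 3 ∨ (a : ZMod 9) = 6) :
    (3:ℤ) ∣ a := by
  have h3 : ((a : ZMod 3)) = 0 := by
    have : (ZMod.castHom (show (3:ℕ) ∣ 9 by norm_num) (ZMod 3)) ((a : ZMod 9)) = (a : ZMod 3) :=
      map_intCast _ a
    rcases h with h | h | h <;> rw [h] at this <;> rw [← this] <;> decide
  exact (ZMod.intCast_zmod_eq_zero_iff_dvd a 3).1 h3

lemma three_dvd_of_gf (a b c : ℤ) (h : (3:ℤ) ∣ Gf a b c) : (3:ℤ) ∣ a := by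
  have h3 : ((Gf a b c : ℤ) : ZMod 3) = 0 := (ZMod.intCast_zmod_eq_zero_iff_dvd _ 3).2 h
  have e3 : (3 : ZMod 3) = 0 := rfl
  have ha : ((a : ZMod 3))^3 = 0 := by
    push_cast [Gf] at h3
    linear_combination h3 - ((b:ZMod 3)^3 + 3*(c:ZMod 3)^3 - (a:ZMod 3)^2*(b:ZMod 3)
      + 3*(a:ZMod 3)^2*(c:ZMod 3) - 3*(a:ZMod 3)*(b:ZMod 3)*(c:ZMod 3)
      + 6*(a:ZMod 3)*(c:ZMod 3)^2 - 3*(b:ZMod 3)^2*(c:ZMod 3)) * e3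
  have : (a : ZMod 3) = 0 := by
    revert ha; generalize (a : ZMod 3) = x; revert x; decide
  exact (ZMod.intCast_zmod_eq_zero_iff_dvd a 3).1 this

lemma gf_shift (a b c : ℤ) : Gf (3*a) b c = 3 * Gf b (c + 3*a) a := by
  simp only [Gf]; ring

lemma keyG (n : ℕ) : ∀ v : ℤ, v.natAbs = n → ∀ a b c : ℤ, Gf a b c = 4*v^3 → v = 0 := by
  induction n using Nat.strong_induction_on with
  | _ n ih =>
    intro v hn a b c h
    by_contra hv0
    have h9 : ((a:ZMod 9) = 0 ∨ (a:ZMod 9) = 3 ∨ (a:ZMod 9) = 6) ∧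
        ((v:ZMod 9) = 0 ∨ (v:ZMod 9) = 3 ∨ (v:ZMod 9) = 6) := by
      apply mod9 (a:ZMod 9) (b:ZMod 9) (c:ZMod 9) (v:ZMod 9)
      have := congrArg (fun t : ℤ => (t : ZMod 9)) h
      push_cast [Gf] at this ⊢
      exact this
    obtain ⟨a', rfl⟩ := zmod9_to_dvd a h9.1
    obtain ⟨v', rfl⟩ := zmod9_to_dvd v h9.2
    rw [gf_shift] at h
    have h1 : Gf b (c + 3*a') a' = 36 * v'^3 := by linarith
    obtain ⟨b', rfl⟩ := three_dvd_of_gf _ _ _ ⟨12*v'^3, by linarith⟩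
    rw [gf_shift] at h1
    have h2 : Gf (c + 3*a') (a' + 3*b') b' = 12 * v'^3 := by linarith
    obtain ⟨c', hc⟩ := three_dvd_of_gf _ _ _ ⟨4*v'^3, by linarith⟩
    rw [hc, gf_shift] at h2
    have h3 : Gf (a' + 3*b') (b' + 3*c') c' = 4 * v'^3 := by linarith
    have hv' : v' = 0 := by
      refine ih v'.natAbs ?_ v' rfl _ _ _ h3
      have : (3*v').natAbs = 3 * v'.natAbs := by
        rw [Int.natAbs_mul]; rfl
      omega
    exact hv0 (by omega)

lemma keyGZ (A B Cc d : ℤ) (hd : d ≠ 0) : 81 * Gf A B Cc ≠ 4 * d^3 := by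
  intro hint
  have h3d : (3:ℤ) ∣ d := by
    have : (3:ℤ) ∣ 4 * d^3 := ⟨27 * Gf A B Cc, by linarith⟩
    have hp : Prime (3:ℤ) := Int.prime_three
    rcases (hp.dvd_mul.1 this) with h' | h'
    · norm_num at h'
    · exact hp.dvd_of_dvd_pow h'
  obtain ⟨d₁, rfl⟩ := h3d
  have h1 : 3 * Gf A B Cc = 4 * d₁^3 := by linarith
  have h3d1 : (3:ℤ) ∣ d₁ := by
    have : (3:ℤ) ∣ 4 * d₁^3 := ⟨Gf A B Cc, by linarith⟩
    have hp : Prime (3:ℤ) := Int.prime_three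
    rcases (hp.dvd_mul.1 this) with h' | h'
    · norm_num at h'
    · exact hp.dvd_of_dvd_pow h'
  obtain ⟨d₂, rfl⟩ := h3d1
  have h2 : Gf A B Cc = 36 * d₂^3 := by linarith
  obtain ⟨A', rfl⟩ := three_dvd_of_gf _ _ _ ⟨12*d₂^3, by linarith⟩
  rw [gf_shift] at h2
  have h2' : Gf B (Cc + 3*A') A' = 12 * d₂^3 := by linarith
  obtain ⟨B', rfl⟩ := three_dvd_of_gf _ _ _ ⟨4*d₂^3, by linarith⟩
  rw [gf_shift] at h2'
  have h2'' : Gf (Cc + 3*A') (A' + 3*B') B' = 4 * d₂^3 := by linarith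
  have : d₂ = 0 := keyG _ d₂ rfl _ _ _ h2''
  omega

lemma keyGQ (a b c : ℚ) : 81 * Gf a b c ≠ 4 := by
  intro h
  have hden : ∀ q : ℚ, (q.num : ℚ) = q * (q.den : ℚ) := by
    intro q
    have h0 : ((q.den : ℚ)) ≠ 0 := by exact_mod_cast q.den_nz
    have h1 : (q:ℚ) = (q.num:ℚ)/(q.den:ℚ) := (Rat.num_div_den q).symm
    rw [eq_div_iff h0] at h1
    exact h1.symm
  have hd0 : ((a.den : ℤ) * (b.den : ℤ) * (c.den : ℤ)) ≠ 0 := by positivity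
  apply keyGZ (a.num * (b.den : ℤ) * (c.den : ℤ)) (b.num * (a.den : ℤ) * (c.den : ℤ))
    (c.num * (a.den : ℤ) * (b.den : ℤ)) ((a.den : ℤ) * (b.den : ℤ) * (c.den : ℤ)) hd0
  have key : 81 * Gf ((a.num * (b.den:ℤ) * (c.den:ℤ) : ℤ) : ℚ)
      ((b.num * (a.den:ℤ) * (c.den:ℤ) : ℤ) : ℚ) ((c.num * (a.den:ℤ) * (b.den:ℤ) : ℤ) : ℚ)
      = 4 * (((a.den:ℤ) * (b.den:ℤ) * (c.den:ℤ) : ℤ) : ℚ)^3 := by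
    push_cast
    rw [hden a, hden b, hden c]
    simp only [Gf] at h ⊢
    linear_combination ((a.den:ℚ) * (b.den:ℚ) * (c.den:ℚ))^3 * h
  push_cast [Gf] at key ⊢
  exact_mod_cast key


def Amat : Matrix (Fin 3) (Fin 3) ℚ := !![0, 0, 2; 1/2, 0, 3; 0, 1, 0]

lemma Amat_det : Amat.det = 1 := by
  simp [Amat, Matrix.det_fin_three]

lemma Amat_charpoly : Amat.charpoly = (X : ℚ[X])^3 - 3*X - 1 := by
  have h : charmatrix Amat = !![(X:ℚ[X]), 0, -C 2; -C (1/2 : ℚ), X, -C 3; 0, -C 1, X] := by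
    ext i j
    fin_cases i <;> fin_cases j <;>
      simp [charmatrix_apply_eq, charmatrix_apply_ne, Amat]
  rw [Matrix.charpoly, h, Matrix.det_fin_three]
  simp [map_ofNat]
  ring_nf
  rw [show ((2:ℚ[X])) = C 2 from (map_ofNat C 2).symm, ← C_mul]
  norm_num
  ring

lemma irred : Irreducible ((X : ℚ[X]) ^ 3 - 3 * X - 1) := by
  have hmonic : ((X:ℤ[X])^3 - 3*X - 1).Monic := by
    monicity!
  have h1 : ((X:ℚ[X])^3 - 3*X - 1) = Polynomial.map (algebraMap ℤ ℚ) ((X:ℤ[X])^3 - 3*X - 1) := by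
    simp [Polynomial.map_ofNat]
  rw [h1, ← hmonic.isPrimitive.irreducible_iff_irreducible_map_fraction_map]
  apply hmonic.irreducible_of_irreducible_map (Int.castRingHom (ZMod 2))
  have h2 : Polynomial.map (Int.castRingHom (ZMod 2)) ((X:ℤ[X])^3 - 3*X - 1)
      = (X:(ZMod 2)[X])^3 - 3*X - 1 := by
    simp [Polynomial.map_ofNat]
  rw [h2]
  have hdeg : ((X:(ZMod 2)[X])^3 - 3*X - 1).natDegree = 3 := by compute_degree!
  rw [Polynomial.irreducible_iff_roots_eq_zero_of_degree_le_three]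
  · rw [Multiset.eq_zero_iff_forall_notMem]
    intro x hx
    have hne : ((X:(ZMod 2)[X])^3 - 3*X - 1) ≠ 0 := by
      intro hz
      rw [hz] at hdeg
      simp at hdeg
    rw [mem_roots hne, Polynomial.IsRoot] at hx
    simp only [eval_sub, eval_pow, eval_mul, eval_X, eval_one, eval_ofNat] at hx
    revert hx
    fin_cases x <;> decide
  · rw [hdeg]; norm_num
  · rw [hdeg]

lemma main_core :
    ¬ ∃ C : Matrix (Fin 3) (Fin 3) ℚ, C.det = 1 ∧ C * Amat * C⁻¹ = Amatᵀ := by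
  rintro ⟨C, hdet, hconj⟩
  have hCu : IsUnit C.det := by rw [hdet]; exact isUnit_one
  have hC : C * Amat = Amatᵀ * C := by
    have h1 := congrArg (fun M => M * C) hconj
    rwa [mul_assoc, Matrix.nonsing_inv_mul C hCu, mul_one] at h1
  have hT : Amatᵀ = !![0, 1/2, 0; 0, 0, 1; 2, 3, 0] := by
    ext i j
    fin_cases i <;> fin_cases j <;> simp [Amat]
  rw [hT] at hC
  have h00 := congrFun (congrFun hC 0) 0
  have h01 := congrFun (congrFun hC 0) 1
  have h02 := congrFun (congrFun hC 0) 2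
  have h10 := congrFun (congrFun hC 1) 0
  have h11 := congrFun (congrFun hC 1) 1
  have h12 := congrFun (congrFun hC 1) 2
  have h20 := congrFun (congrFun hC 2) 0
  have h21 := congrFun (congrFun hC 2) 1
  have h22 := congrFun (congrFun hC 2) 2
  simp [Matrix.mul_apply, Fin.sum_univ_three, Amat] at h00 h01 h02 h10 h11 h12 h20 h21 h22
  have e00 : C 0 0 = 9/2 * C 2 0 + 1/4 * C 2 1 - 3/4 * C 2 2 := by
    linarith
  have e01 : C 0 1 = -3 * C 2 0 + 1/2 * C 2 2 := by linarith
  have e02 : C 0 2 = C 2 0 := by linarith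
  have e10 : C 1 0 = -3 * C 2 0 + 1/2 * C 2 2 := by linarith
  have e11 : C 1 1 = 2 * C 2 0 := by linarith
  have e12 : C 1 2 = C 2 1 := by linarith
  rw [Matrix.det_fin_three, e00, e01, e02, e10, e11, e12] at hdet
  apply keyGQ ((46 * C 2 0 + 3 * C 2 1 - 8 * C 2 2)/3)
    ((-34 * C 2 0 - 2 * C 2 1 + 6 * C 2 2)/3)
    ((-62 * C 2 0 - 4 * C 2 1 + 11 * C 2 2)/9)
  simp only [Gf]
  linear_combination 4 * hdet

/-- There exists `A ∈ SL(3,ℚ)` whose characteristic polynomial is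
`X³ − 3X − 1` (which is irreducible over `ℚ`) and which is not a product of two
symmetric matrices in `SL(3,ℚ)`; in particular `A` is not conjugate to `ᵗA` by any
element of `SL(3,ℚ)`. -/
theorem stmt15 :
    Irreducible ((X : ℚ[X]) ^ 3 - 3 * X - 1) ∧
    ∃ A : Matrix (Fin 3) (Fin 3) ℚ, A.det = 1 ∧
      A.charpoly = (X : ℚ[X]) ^ 3 - 3 * X - 1 ∧
      (¬ ∃ S₁ S₂ : Matrix (Fin 3) (Fin 3) ℚ,
        S₁ᵀ = S₁ ∧ S₂ᵀ = S₂ ∧ S₁.det = 1 ∧ S₂.det = 1 ∧ A = S₁ * S₂) ∧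
      (¬ ∃ C : Matrix (Fin 3) (Fin 3) ℚ, C.det = 1 ∧ C * A * C⁻¹ = Aᵀ) := by
  refine ⟨irred, Amat, Amat_det, Amat_charpoly, ?_, main_core⟩
  rintro ⟨S₁, S₂, hS1, hS2, hd1, hd2, hA⟩
  apply main_core
  refine ⟨S₂, hd2, ?_⟩
  have hS2u : IsUnit S₂.det := by rw [hd2]; exact isUnit_one
  rw [hA, Matrix.transpose_mul, hS1, hS2, ← mul_assoc S₂ S₁ S₂,
    mul_assoc (S₂ * S₁) S₂ S₂⁻¹, Matrix.mul_nonsing_inv S₂ hS2u, mul_one]
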